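/- Let q be a prime power, m ≥ 2, and n = (q^m − 1)/(q − 1). The narrow-sense BCH code C_{(n,q,m,2)} = {c ∈ GF(q)^n : Σ_{j=0}^{n−1} c_j β^j = 0} has dimension n − m over GF(q), and its minimum distance d equals 3 if gcd(m, q−1) = 1 and equals 2 if gcd(m, q−1) > 1. -/

import Mathlib

/-- The linear map `c ↦ Σ_j c_j • β^(i·j)` from `GF(q)^n` to `GF(q^m)`. -/
noncomputable def bchCheck (F E : Type*) [Field F] [Field E] [Algebra F E]
    (n : ℕ) (β : E) (i : ℕ) : (Fin n → F) →ₗ[F] E :=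
  ∑ j : Fin n, (LinearMap.proj j : (Fin n → F) →ₗ[F] F).smulRight (β ^ (i * (j : ℕ)))

/-- The narrow-sense BCH code of length `n` and designed distance `δ`:
all `c` with `Σ_j c_j β^(i·j) = 0` for `1 ≤ i ≤ δ - 1`. -/
noncomputable def bchCode (F E : Type*) [Field F] [Field E] [Algebra F E]
    (n : ℕ) (β : E) (δ : ℕ) : Submodule F (Fin n → F) :=
  ⨅ i ∈ Finset.Icc 1 (δ - 1), LinearMap.ker (bchCheck F E n β i)

set_option linter.unusedVariables false
set_option linter.unusedSectionVars false

lemma stmt5_geom_mul (q m : ℕ) (hq : 1 ≤ q) :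
    (q - 1) * (∑ i ∈ Finset.range m, q ^ i) = q ^ m - 1 := by
  induction m with
  | zero => simp
  | succ k ih =>
    rw [Finset.sum_range_succ, Nat.mul_add, ih, pow_succ]
    have h1 : 1 ≤ q ^ k := Nat.one_le_pow _ _ hq
    have : (q - 1) * q ^ k = q ^ k * q - q ^ k := by
      rw [Nat.sub_mul, one_mul, Nat.mul_comm]
    have h2 : q ^ k ≤ q ^ k * q := Nat.le_mul_of_pos_right _ (by omega)
    omega

section
variable (F E : Type*) [Field F] [Field E] [Algebra F E] (n : ℕ) (β : E)

lemma stmt5_bchCheck_apply (i : ℕ) (c : Fin n → F) :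
    bchCheck F E n β i c = ∑ j : Fin n, algebraMap F E (c j) * β ^ (i * (j : ℕ)) := by
  simp [bchCheck, LinearMap.sum_apply, Algebra.smul_def]

lemma stmt5_bchCode_two : bchCode F E n β 2 = LinearMap.ker (bchCheck F E n β 1) := by
  simp [bchCode]

lemma stmt5_mem_bchCode_two (c : Fin n → F) :
    c ∈ bchCode F E n β 2 ↔ ∑ j : Fin n, algebraMap F E (c j) * β ^ (j : ℕ) = 0 := by
  rw [stmt5_bchCode_two, LinearMap.mem_ker, stmt5_bchCheck_apply]
  simp
end

section
variable {F E : Type*} [Field F] [DecidableEq F] [Field E] [Algebra F E] {n : ℕ} {β : E}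

lemma stmt5_no_wt_one (hβ0 : β ≠ 0) (c : Fin n → F)
    (hc : ∑ j : Fin n, algebraMap F E (c j) * β ^ (j : ℕ) = 0)
    (h1 : hammingNorm c = 1) : False := by
  classical
  obtain ⟨j, hj⟩ := Finset.card_eq_one.mp h1
  have hsum : ∑ i : Fin n, algebraMap F E (c i) * β ^ (i : ℕ)
      = ∑ i ∈ ({i | c i ≠ 0} : Finset (Fin n)), algebraMap F E (c i) * β ^ (i : ℕ) := by
    refine (Finset.sum_filter_of_ne ?_).symm
    intro x _ hx hcx
    simp [hcx] at hx
  rw [hsum, hj, Finset.sum_singleton] at hc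
  have hj0 : c j ≠ 0 := by
    have : j ∈ ({i | c i ≠ 0} : Finset (Fin n)) := hj ▸ Finset.mem_singleton_self j
    simpa using this
  exact (mul_ne_zero (by simpa using hj0) (pow_ne_zero _ hβ0)) hc

lemma stmt5_no_pair (q : ℕ) (hq : 2 ≤ q) [Fintype F] (hF : Fintype.card F = q)
    (hordβ : orderOf β = n) (hβ0 : β ≠ 0)
    (hcop : Nat.Coprime n (q - 1))
    (j k : Fin n) (hjk : (j : ℕ) < (k : ℕ)) (a b : F) (ha : a ≠ 0) (hb : b ≠ 0)
    (h : algebraMap F E a * β ^ (j : ℕ) + algebraMap F E b * β ^ (k : ℕ) = 0) : False := by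
  have hpow : β ^ (k : ℕ) = β ^ (j : ℕ) * β ^ ((k:ℕ) - (j:ℕ)) := by
    rw [← pow_add]; congr 1; omega
  have hfac : β ^ (j:ℕ) * (algebraMap F E a + algebraMap F E b * β ^ ((k:ℕ) - (j:ℕ))) = 0 := by
    rw [hpow] at h; linear_combination h
  have h2 : algebraMap F E a + algebraMap F E b * β ^ ((k:ℕ) - (j:ℕ)) = 0 :=
    (mul_eq_zero.mp hfac).resolve_left (pow_ne_zero _ hβ0)
  have hbE : algebraMap F E b ≠ 0 := by simpa using hb
  have h3 : β ^ ((k:ℕ) - (j:ℕ)) = algebraMap F E (-a / b) := by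
    rw [map_div₀, map_neg, eq_div_iff hbE]
    linear_combination h2
  have h4 : (β ^ ((k:ℕ) - (j:ℕ))) ^ (q - 1) = 1 := by
    rw [h3, ← map_pow]
    have : (-a / b) ^ (q - 1) = 1 := by
      rw [← hF]
      exact FiniteField.pow_card_sub_one_eq_one _ (by simp [ha, hb])
    rw [this, map_one]
  rw [← pow_mul] at h4
  have h5 : n ∣ ((k:ℕ) - (j:ℕ)) * (q - 1) := by
    have h5' := orderOf_dvd_of_pow_eq_one h4
    rwa [hordβ] at h5'
  have h6 : n ∣ ((k:ℕ) - (j:ℕ)) := hcop.dvd_of_dvd_mul_right h5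
  have := Nat.le_of_dvd (by omega) h6
  omega

lemma stmt5_no_wt_two (q : ℕ) (hq : 2 ≤ q) [Fintype F] (hF : Fintype.card F = q)
    (hordβ : orderOf β = n) (hβ0 : β ≠ 0) (hcop : Nat.Coprime n (q - 1))
    (c : Fin n → F) (hc : ∑ j : Fin n, algebraMap F E (c j) * β ^ (j : ℕ) = 0)
    (h2 : hammingNorm c = 2) : False := by
  classical
  obtain ⟨j, k, hjk, hset⟩ := Finset.card_eq_two.mp h2
  have hsum : ∑ i : Fin n, algebraMap F E (c i) * β ^ (i : ℕ)
      = ∑ i ∈ ({i | c i ≠ 0} : Finset (Fin n)), algebraMap F E (c i) * β ^ (i : ℕ) := by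
    refine (Finset.sum_filter_of_ne ?_).symm
    intro x _ hx hcx
    simp [hcx] at hx
  rw [hsum, hset, Finset.sum_insert (by simpa using hjk), Finset.sum_singleton] at hc
  have hcj : c j ≠ 0 := by
    have : j ∈ ({i | c i ≠ 0} : Finset (Fin n)) := hset ▸ by simp
    simpa using this
  have hck : c k ≠ 0 := by
    have : k ∈ ({i | c i ≠ 0} : Finset (Fin n)) := hset ▸ by simp
    simpa using this
  rcases Nat.lt_or_ge (j : ℕ) (k : ℕ) with h | h
  · exact stmt5_no_pair q hq hF hordβ hβ0 hcop j k h _ _ hcj hck hc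
  · have hlt : (k : ℕ) < (j : ℕ) := by
      rcases Nat.lt_or_ge (k : ℕ) (j : ℕ) with h' | h'
      · exact h'
      · exact absurd (Fin.ext (by omega)) hjk
    exact stmt5_no_pair q hq hF hordβ hβ0 hcop k j hlt _ _ hck hcj (by linear_combination hc)

lemma stmt5_pair_norm (i0 i1 : Fin n) (h01 : i0 ≠ i1) (a b : F) (ha : a ≠ 0) (hb : b ≠ 0) :
    hammingNorm (fun i => if i = i0 then a else if i = i1 then b else 0) = 2 := by
  have : (Finset.univ.filter fun i =>
      (if i = i0 then a else if i = i1 then b else 0) ≠ 0) = {i0, i1} := by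
    ext i
    by_cases h0 : i = i0 <;> by_cases h1 : i = i1 <;> simp_all [Ne.symm h01]
  show (Finset.univ.filter _).card = 2
  rw [this, Finset.card_pair h01]

lemma stmt5_pair_sum (i0 i1 : Fin n) (h01 : i0 ≠ i1) (a b : F) :
    ∑ j : Fin n, algebraMap F E ((fun i => if i = i0 then a else if i = i1 then b else 0) j)
        * β ^ (j : ℕ)
      = algebraMap F E a * β ^ (i0 : ℕ) + algebraMap F E b * β ^ (i1 : ℕ) := by
  have hfun : ∀ j : Fin n,
      algebraMap F E ((fun i => if i = i0 then a else if i = i1 then b else 0) j) * β ^ (j : ℕ)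
      = (if j = i0 then algebraMap F E a * β ^ (i0 : ℕ) else 0)
        + (if j = i1 then algebraMap F E b * β ^ (i1 : ℕ) else 0) := by
    intro j
    by_cases h0 : j = i0 <;> by_cases h1 : j = i1
    · exact absurd (h0.symm.trans h1) h01
    · subst h0; simp [h01, Ne.symm h01]
    · subst h1; simp [h01, Ne.symm h01]
    · simp [h0, h1]
  rw [Finset.sum_congr rfl (fun j _ => hfun j), Finset.sum_add_distrib]
  simp [Finset.sum_ite_eq']

lemma stmt5_triple_norm (i0 i1 i2 : Fin n) (h01 : i0 ≠ i1) (h02 : i0 ≠ i2) (h12 : i1 ≠ i2)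
    (a b c : F) (ha : a ≠ 0) (hb : b ≠ 0) (hc : c ≠ 0) :
    hammingNorm (fun i => if i = i0 then a else if i = i1 then b else if i = i2 then c else 0)
      = 3 := by
  have : (Finset.univ.filter fun i =>
      (if i = i0 then a else if i = i1 then b else if i = i2 then c else 0) ≠ 0)
      = {i0, i1, i2} := by
    ext i
    by_cases h0 : i = i0 <;> by_cases h1 : i = i1 <;> by_cases h2 : i = i2 <;>
      simp_all [Ne.symm h01, Ne.symm h02, Ne.symm h12]
  show (Finset.univ.filter _).card = 3
  rw [this, Finset.card_insert_of_notMem (by simp [h01, h02]),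
    Finset.card_pair h12]

lemma stmt5_triple_sum (i0 i1 i2 : Fin n) (h01 : i0 ≠ i1) (h02 : i0 ≠ i2) (h12 : i1 ≠ i2)
    (a b c : F) :
    ∑ j : Fin n, algebraMap F E
        ((fun i => if i = i0 then a else if i = i1 then b else if i = i2 then c else 0) j)
        * β ^ (j : ℕ)
      = algebraMap F E a * β ^ (i0 : ℕ) + algebraMap F E b * β ^ (i1 : ℕ)
        + algebraMap F E c * β ^ (i2 : ℕ) := by
  have hfun : ∀ j : Fin n,
      algebraMap F E
        ((fun i => if i = i0 then a else if i = i1 then b else if i = i2 then c else 0) j)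
        * β ^ (j : ℕ)
      = (if j = i0 then algebraMap F E a * β ^ (i0 : ℕ) else 0)
        + ((if j = i1 then algebraMap F E b * β ^ (i1 : ℕ) else 0)
        + (if j = i2 then algebraMap F E c * β ^ (i2 : ℕ) else 0)) := by
    intro j
    by_cases h0 : j = i0 <;> by_cases h1 : j = i1 <;> by_cases h2 : j = i2 <;>
      simp_all [Ne.symm h01, Ne.symm h02, Ne.symm h12]
  rw [Finset.sum_congr rfl (fun j _ => hfun j), Finset.sum_add_distrib, Finset.sum_add_distrib]
  simp [Finset.sum_ite_eq']
  ring
end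

theorem stmt5 (q m n : ℕ) (hm : 2 ≤ m) (hn : n = (q ^ m - 1) / (q - 1))
    (F E : Type*) [Field F] [Fintype F] [DecidableEq F] [Field E] [Fintype E]
    [Algebra F E] (hF : Fintype.card F = q) (hE : Fintype.card E = q ^ m)
    (α : E) (hα : orderOf α = q ^ m - 1) (β : E) (hβ : β = α ^ (q - 1)) :
    Module.finrank F ↥(bchCode F E n β 2) = n - m ∧
      IsLeast {w : ℕ | ∃ c ∈ bchCode F E n β 2, c ≠ 0 ∧ hammingNorm c = w}
        (if Nat.gcd m (q - 1) = 1 then 3 else 2) := by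
  classical
  -- basic numerics
  have hq : 2 ≤ q := hF ▸ Fintype.one_lt_card
  have hqm1 : 0 < q ^ m - 1 := by
    have : q ^ 1 ≤ q ^ m := Nat.pow_le_pow_right (by omega) (by omega)
    simp at this; omega
  have hnsum : n = ∑ i ∈ Finset.range m, q ^ i := by
    have := stmt5_geom_mul q m (by omega)
    rw [hn, ← this, Nat.mul_div_cancel_left _ (by omega : 0 < q - 1)]
  have hmul : (q - 1) * n = q ^ m - 1 := by
    rw [hnsum]; exact stmt5_geom_mul q m (by omega)
  have hnbounds : q ^ (m - 1) < ∑ i ∈ Finset.range m, q ^ i ∧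
      q + 1 ≤ ∑ i ∈ Finset.range m, q ^ i := by
    have h1 : ∑ i ∈ Finset.range m, q ^ i
        = (∑ i ∈ Finset.range (m-1), q ^ i) + q ^ (m-1) := by
      have hm1 : m = (m-1)+1 := by omega
      rw [hm1, Finset.sum_range_succ]; congr 2 <;> omega
    have h2 : (∑ i ∈ Finset.range (m-1), q ^ i) ≥ 1 := by
      calc 1 = ∑ i ∈ Finset.range 1, q^i := by rw [Finset.sum_range_one, pow_zero]
      _ ≤ _ := Finset.sum_le_sum_of_subset (by intro x hx; simp at hx ⊢; omega)
    have h3 : q ≤ q ^ (m-1) := by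
      calc q = q^1 := (pow_one q).symm
      _ ≤ _ := Nat.pow_le_pow_right (by omega) (by omega)
    omega
  have hngt : q ^ (m - 1) < n := by rw [hnsum]; exact hnbounds.1
  have hnq : q + 1 ≤ n := by rw [hnsum]; exact hnbounds.2
  have hn3 : 3 ≤ n := by omega
  -- basic field facts
  have hα0 : α ≠ 0 := by
    intro h
    have h1 : α ^ (q ^ m - 1) = 1 := hα ▸ pow_orderOf_eq_one α
    rw [h, zero_pow (by omega)] at h1
    exact zero_ne_one h1
  have hα1 : α ^ (q ^ m - 1) = 1 := hα ▸ pow_orderOf_eq_one α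
  have hordβ : orderOf β = n := by
    rw [hβ, orderOf_pow' α (n := q - 1) (by omega), hα,
      Nat.gcd_eq_right ⟨n, by omega⟩, ← hmul, Nat.mul_div_cancel_left _ (by omega : 0 < q - 1)]
  have hβ0 : β ≠ 0 := by
    intro h
    rw [h] at hordβ
    have : (0:E) ^ n = 1 := hordβ ▸ pow_orderOf_eq_one (0:E)
    rw [zero_pow (by omega)] at this
    exact zero_ne_one this
  have hβn1 : β ^ n = 1 := by rw [← hordβ]; exact pow_orderOf_eq_one β
  have hgen : ∀ x : E, x ≠ 0 → ∃ r : ℕ, α ^ r = x := by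
    intro x hx
    have hcard : Nat.card Eˣ = q ^ m - 1 := by
      rw [Nat.card_eq_fintype_card, Fintype.card_units, hE]
    have hu : orderOf (Units.mk0 α hα0) = q ^ m - 1 := by
      rw [← orderOf_units]; simpa using hα
    have htop : Subgroup.zpowers (Units.mk0 α hα0) = ⊤ := by
      apply Subgroup.eq_top_of_card_eq
      rw [Nat.card_zpowers, hu, hcard]
    have hxmem : Units.mk0 x hx ∈ Subgroup.zpowers (Units.mk0 α hα0) := htop ▸ Subgroup.mem_top _
    have hfin : IsOfFinOrder (Units.mk0 α hα0) := isOfFinOrder_of_finite _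
    rw [← hfin.mem_powers_iff_mem_zpowers, Submonoid.mem_powers_iff] at hxmem
    obtain ⟨r, hr⟩ := hxmem
    exact ⟨r, by simpa using congrArg Units.val hr⟩
  have hFimg : ∀ x : E, x ^ (q - 1) = 1 → ∃ a : F, a ≠ 0 ∧ algebraMap F E a = x := by
    intro x hx
    set S : Finset E := (Finset.univ.filter fun a : F => a ≠ 0).image (algebraMap F E) with hS
    have hcardS : S.card = q - 1 := by
      rw [hS, Finset.card_image_of_injective _ (algebraMap F E).injective]
      rw [Finset.filter_ne', Finset.card_erase_of_mem (Finset.mem_univ _),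
        Finset.card_univ, hF]
    have hsub : S ⊆ Polynomial.nthRootsFinset (q-1) (1:E) := by
      intro y hy
      rw [Polynomial.mem_nthRootsFinset (by omega)]
      rw [hS, Finset.mem_image] at hy
      obtain ⟨a, ha, rfl⟩ := hy
      rw [Finset.mem_filter] at ha
      have hone : a ^ (q - 1) = 1 := by
        rw [← hF]; exact FiniteField.pow_card_sub_one_eq_one a ha.2
      rw [← map_pow, hone, map_one]
    have hle : (Polynomial.nthRootsFinset (q-1) (1:E)).card ≤ q - 1 := by
      rw [Polynomial.nthRootsFinset_def]
      exact le_trans (Multiset.toFinset_card_le _)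
        (by simpa using Polynomial.card_nthRoots (q-1) (1:E))
    have heq : S = Polynomial.nthRootsFinset (q-1) (1:E) :=
      Finset.eq_of_subset_of_card_le hsub (by omega)
    have hxS : x ∈ S := by
      rw [heq, Polynomial.mem_nthRootsFinset (by omega)]; exact hx
    rw [hS, Finset.mem_image] at hxS
    obtain ⟨a, ha, rfl⟩ := hxS
    exact ⟨a, (Finset.mem_filter.mp ha).2, rfl⟩
  -- gcd identity
  have hpows : ∀ i, q ^ i = 1 + (q-1) * ∑ l ∈ Finset.range i, q ^ l := by
    intro i
    have hg := stmt5_geom_mul q i (by omega)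
    have h1 : 1 ≤ q ^ i := Nat.one_le_pow _ _ (by omega)
    omega
  have hnK : n = m + (q-1) * ∑ i ∈ Finset.range m, ∑ l ∈ Finset.range i, q ^ l := by
    rw [hnsum, Finset.sum_congr rfl fun i _ => hpows i, Finset.sum_add_distrib,
      Finset.sum_const, Finset.card_range, smul_eq_mul, mul_one, ← Finset.mul_sum]
  have hgcd : Nat.gcd n (q-1) = Nat.gcd m (q-1) := by
    rw [hnK]
    exact Nat.gcd_add_mul_left_left (q-1) m _
  -- ====================== dimension ======================
  have : Module.Finite F E := Module.finite_iff_finite.mpr inferInstance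
  have hrank : Module.finrank F E = m := by
    have hcard : Fintype.card E = Fintype.card F ^ Module.finrank F E := Module.card_eq_pow_finrank
    rw [hE, hF] at hcard
    exact (Nat.pow_right_injective hq hcard.symm)
  have hdim : Module.finrank F ↥(bchCode F E n β 2) = n - m := by
    set V : Submodule F E := Submodule.span F (Set.range fun k : ℕ => β ^ k) with hV
    have hVtop : V = ⊤ := by
      have hle : Module.finrank F ↥V ≤ m := hrank ▸ Submodule.finrank_le V
      have hgt : q ^ (m - 1) < Fintype.card ↥V := by
        have hsub : (Finset.image (fun i : Fin n => β ^ (i : ℕ)) Finset.univ) ∪ {0} ⊆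
            (V : Set E).toFinset := by
          intro x hx
          simp only [Finset.mem_union, Finset.mem_image, Finset.mem_singleton] at hx
          rw [Set.mem_toFinset]
          rcases hx with ⟨i, _, rfl⟩ | rfl
          · exact Submodule.subset_span ⟨i, rfl⟩
          · exact V.zero_mem
        have hinj : Function.Injective (fun i : Fin n => β ^ (i : ℕ)) := by
          intro i j hij
          have := pow_injOn_Iio_orderOf (x := β)
            (by rw [Set.mem_Iio, hordβ]; exact i.isLt)
            (by rw [Set.mem_Iio, hordβ]; exact j.isLt) hij
          exact Fin.ext this
        have hcard1 : (Finset.image (fun i : Fin n => β ^ (i : ℕ)) Finset.univ ∪ {0}).card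
            = n + 1 := by
          rw [Finset.card_union_of_disjoint, Finset.card_image_of_injective _ hinj,
            Finset.card_univ, Fintype.card_fin, Finset.card_singleton]
          simp only [Finset.disjoint_singleton_right, Finset.mem_image]
          rintro ⟨i, -, hi⟩
          exact pow_ne_zero _ hβ0 hi
        have := Finset.card_le_card hsub
        rw [hcard1, Set.toFinset_card] at this
        calc q ^ (m-1) < n + 1 := by omega
        _ ≤ _ := this
      have hVrank : Fintype.card ↥V = q ^ Module.finrank F ↥V := by
        rw [← hF]; exact Module.card_eq_pow_finrank
      rw [hVrank] at hgt
      have : m - 1 < Module.finrank F ↥V := (Nat.pow_lt_pow_iff_right hq).mp hgt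
      have hge : Module.finrank F ↥V = m := by omega
      exact Submodule.eq_top_of_finrank_eq (by rw [hge, hrank])
    have hrange : LinearMap.range (bchCheck F E n β 1) = ⊤ := by
      rw [← top_le_iff, ← hVtop, hV, Submodule.span_le]
      rintro x ⟨k, rfl⟩
      have hk : (fun k : ℕ => β ^ k) k = β ^ (k % n) := by
        show β ^ k = β ^ (k % n)
        rw [← hordβ] at *
        exact (pow_mod_orderOf β k).symm
      rw [SetLike.mem_coe, hk]
      refine ⟨Pi.single ⟨k % n, Nat.mod_lt _ (by omega)⟩ 1, ?_⟩
      rw [stmt5_bchCheck_apply]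
      rw [Finset.sum_eq_single (⟨k % n, Nat.mod_lt _ (by omega)⟩ : Fin n)]
      · simp
      · intro b _ hb; simp [Pi.single_apply, hb]
      · simp
    have := LinearMap.finrank_range_add_finrank_ker (bchCheck F E n β 1)
    rw [hrange, Module.finrank_fintype_fun_eq_card, Fintype.card_fin] at this
    rw [stmt5_bchCode_two]
    have htop : Module.finrank F ↥(⊤ : Submodule F E) = m := by rw [finrank_top, hrank]
    omega
  -- ====================== constructions ======================
  have hwt2 : Nat.gcd n (q-1) ≠ 1 → ∃ (i0 i1 : Fin n) (a b : F), i0 ≠ i1 ∧ a ≠ 0 ∧ b ≠ 0 ∧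
      algebraMap F E a * β ^ (i0 : ℕ) + algebraMap F E b * β ^ (i1 : ℕ) = 0 := by
    intro hg1
    set g := Nat.gcd n (q-1) with hg
    have hgpos : 0 < g := Nat.gcd_pos_of_pos_left _ (by omega)
    have hg2 : 2 ≤ g := by omega
    obtain ⟨t, ht⟩ : g ∣ n := Nat.gcd_dvd_left _ _
    obtain ⟨s, hs⟩ : g ∣ (q - 1) := Nat.gcd_dvd_right _ _
    have htpos : 0 < t := by
      rcases Nat.eq_zero_or_pos t with h | h
      · rw [h, Nat.mul_zero] at ht; omega
      · exact h
    have h2t : 2 * t ≤ g * t := Nat.mul_le_mul_right t hg2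
    have htn : t < n := by omega
    have hpow1 : (β ^ t) ^ (q - 1) = 1 := by
      rw [← pow_mul]
      have he : t * (q - 1) = n * s := by rw [hs, ht]; ring
      rw [he, pow_mul, hβn1, one_pow]
    obtain ⟨a, ha0, ha⟩ := hFimg _ hpow1
    refine ⟨⟨t, by omega⟩, ⟨0, by omega⟩, -1, a, ?_, by simp, ha0, ?_⟩
    · intro hcontra
      have := congrArg (Fin.val) hcontra
      simp at this; omega
    · simp only [pow_zero, mul_one, map_neg, map_one, ha]
      ring
  have hwt3 : Nat.gcd n (q-1) = 1 → ∃ (i0 i1 i2 : Fin n) (a b c : F),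
      i0 ≠ i1 ∧ i0 ≠ i2 ∧ i1 ≠ i2 ∧ a ≠ 0 ∧ b ≠ 0 ∧ c ≠ 0 ∧
      algebraMap F E a * β ^ (i0 : ℕ) + algebraMap F E b * β ^ (i1 : ℕ)
        + algebraMap F E c * β ^ (i2 : ℕ) = 0 := by
    intro hg1
    haveI : NeZero n := ⟨by omega⟩
    have hβnotF : ∀ a : F, algebraMap F E a ≠ β := by
      intro a hab
      have ha0 : a ≠ 0 := by
        intro h; rw [h, map_zero] at hab; exact hβ0 hab.symm
      have : β ^ (q - 1) = 1 := by
        rw [← hab, ← map_pow, ← hF, FiniteField.pow_card_sub_one_eq_one a ha0, map_one]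
      have hdvd : n ∣ q - 1 := by
        have h' := orderOf_dvd_of_pow_eq_one this
        rwa [hordβ] at h'
      have := Nat.le_of_dvd (by omega) hdvd
      omega
    have hx0 : (1 : E) + β ≠ 0 := by
      intro h
      have : β = algebraMap F E (-1) := by
        rw [map_neg, map_one]; linear_combination h
      exact hβnotF (-1) this.symm
    obtain ⟨r, hr⟩ := hgen _ hx0
    have hcop : Nat.Coprime (q - 1) n := Nat.coprime_comm.mp hg1
    set u : (ZMod n)ˣ := ZMod.unitOfCoprime (q-1) hcop with hu
    set j0 : ZMod n := (↑u⁻¹ : ZMod n) * (-(r : ZMod n)) with hj0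
    have hjn : j0.val < n := ZMod.val_lt j0
    have hdvd : n ∣ r + (q - 1) * j0.val := by
      rw [← ZMod.natCast_eq_zero_iff]
      push_cast
      rw [ZMod.natCast_zmod_val, ← ZMod.coe_unitOfCoprime (q-1) hcop, ← hu, hj0,
        ← mul_assoc, Units.mul_inv, one_mul]
      ring
    obtain ⟨s, hs⟩ := hdvd
    have h1 : (1 + β) * β ^ j0.val = α ^ (n * s) := by
      rw [← hr, hβ, ← pow_mul, ← pow_add, ← hs]
    have hpow1 : ((1 + β) * β ^ j0.val) ^ (q - 1) = 1 := by
      rw [h1, ← pow_mul]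
      have he : n * s * (q - 1) = (q ^ m - 1) * s := by rw [← hmul]; ring
      rw [he, pow_mul, hα1, one_pow]
    obtain ⟨a, ha0, ha⟩ := hFimg _ hpow1
    have hjne : j0.val ≠ 0 := by
      intro h0
      rw [h0, pow_zero, mul_one] at ha
      exact hβnotF (a - 1) (by rw [map_sub, map_one, ha]; ring)
    set k : ℕ := n - j0.val with hk
    have hk1n : 1 ≤ k ∧ k ≤ n - 1 := by omega
    have hbk : (1 : E) + β = algebraMap F E a * β ^ k := by
      have hβjk : β ^ j0.val * β ^ k = 1 := by
        rw [← pow_add]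
        have : j0.val + k = n := by omega
        rw [this, hβn1]
      calc (1 : E) + β = (1 + β) * (β ^ j0.val * β ^ k) := by rw [hβjk, mul_one]
      _ = ((1 + β) * β ^ j0.val) * β ^ k := by ring
      _ = _ := by rw [ha]
    have hkne1 : k ≠ 1 := by
      intro h1'
      rw [h1', pow_one] at hbk
      have ha1 : a ≠ 1 := by
        rintro rfl
        rw [map_one, one_mul] at hbk
        have h10 : (1 : E) = 0 := by linear_combination hbk
        exact one_ne_zero h10
      have h2 : β * (algebraMap F E a - 1) = 1 := by linear_combination -hbk
      refine hβnotF ((a - 1)⁻¹) ?_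
      rw [map_inv₀, map_sub, map_one]
      exact inv_eq_of_mul_eq_one_left h2
    refine ⟨⟨0, by omega⟩, ⟨1, by omega⟩, ⟨k, by omega⟩, 1, 1, -a,
      ?_, ?_, ?_, one_ne_zero, one_ne_zero, neg_ne_zero.mpr ha0, ?_⟩
    · exact fun h => by have := congrArg Fin.val h; simp at this
    · exact fun h => by have := congrArg Fin.val h; simp at this; omega
    · exact fun h => by have := congrArg Fin.val h; simp at this; omega
    · simp only [map_one, map_neg, one_mul, pow_zero, pow_one]
      linear_combination hbk
  -- ====================== conclusion ======================
  refine ⟨hdim, ?_⟩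
  by_cases hone : Nat.gcd m (q - 1) = 1
  · rw [if_pos hone]
    rw [← hgcd] at hone
    obtain ⟨i0, i1, i2, a, b, c, h01, h02, h12, ha0, hb0, hc0, heq⟩ := hwt3 hone
    constructor
    · refine ⟨fun i => if i = i0 then a else if i = i1 then b else if i = i2 then c else 0,
        ?_, ?_, ?_⟩
      · rw [stmt5_mem_bchCode_two]
        rw [stmt5_triple_sum i0 i1 i2 h01 h02 h12 a b c]
        exact heq
      · intro h0
        have := congrFun h0 i0
        simp only [if_pos rfl, Pi.zero_apply] at this
        exact ha0 this
      · exact stmt5_triple_norm i0 i1 i2 h01 h02 h12 a b c ha0 hb0 hc0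
    · rintro w ⟨cw, hcmem, hc0, rfl⟩
      rw [stmt5_mem_bchCode_two] at hcmem
      by_contra hlt
      push_neg at hlt
      have h012 : hammingNorm cw = 0 ∨ hammingNorm cw = 1 ∨ hammingNorm cw = 2 := by omega
      rcases h012 with h' | h' | h'
      · exact hc0 (hammingNorm_eq_zero.mp h')
      · exact stmt5_no_wt_one hβ0 cw hcmem h'
      · exact stmt5_no_wt_two q hq hF hordβ hβ0 hone cw hcmem h'
  · rw [if_neg hone]
    rw [← hgcd] at hone
    obtain ⟨i0, i1, a, b, h01, ha0, hb0, heq⟩ := hwt2 hone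
    constructor
    · refine ⟨fun i => if i = i0 then a else if i = i1 then b else 0, ?_, ?_, ?_⟩
      · rw [stmt5_mem_bchCode_two]
        rw [stmt5_pair_sum i0 i1 h01 a b]
        exact heq
      · intro h0
        have := congrFun h0 i0
        simp only [if_pos rfl, Pi.zero_apply] at this
        exact ha0 this
      · exact stmt5_pair_norm i0 i1 h01 a b ha0 hb0
    · rintro w ⟨cw, hcmem, hc0, rfl⟩
      rw [stmt5_mem_bchCode_two] at hcmem
      by_contra hlt
      push_neg at hlt
      have h01' : hammingNorm cw = 0 ∨ hammingNorm cw = 1 := by omega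
      rcases h01' with h' | h'
      · exact hc0 (hammingNorm_eq_zero.mp h')
      · exact stmt5_no_wt_one hβ0 cw hcmem h'
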